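/- Densest subgraph counterexample construction: let G be the complete graph on n vertices v₁,…,v_n where every edge incident to v₁ has weight n/2 + 1 and every other edge has weight 1. Then the densest subgraph of G is the whole vertex set and its density equals n − 1. -/

import Mathlib

lemma sum_key (n : ℕ) (hn : 0 < n) (S : Finset (Fin n)) :
    ∑ a ∈ S, ∑ b ∈ S.erase a,
      (if a ≠ b then (if a.val = 0 ∨ b.val = 0 then (n : ℝ) / 2 + 1 else 1) else 0)
    = S.card * (S.card - 1) +
      (if (⟨0, hn⟩ : Fin n) ∈ S then (n : ℝ) * (S.card - 1) else 0) := by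
  set z : Fin n := ⟨0, hn⟩ with hz
  have hval : ∀ a : Fin n, a.val = 0 ↔ a = z := by
    intro a; exact ⟨fun h => Fin.ext h, fun h => by rw [h]⟩
  have step1 : ∀ a ∈ S, ∑ b ∈ S.erase a,
      (if a ≠ b then (if a.val = 0 ∨ b.val = 0 then (n : ℝ) / 2 + 1 else 1) else 0)
      = ∑ b ∈ S.erase a,
        (1 + (n:ℝ)/2 * ((if a = z then 1 else 0) + (if b = z then (1:ℝ) else 0))) := by
    intro a _
    apply Finset.sum_congr rfl
    intro b hb
    have hab : a ≠ b := fun h => (Finset.mem_erase.mp hb).1 h.symm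
    rw [if_pos hab]
    by_cases ha : a = z <;> by_cases hb' : b = z
    · exact absurd (ha.trans hb'.symm) hab
    · simp [ha, hb', hval]; ring
    · simp [ha, hb', hval]; ring
    · simp [ha, hb', hval]
  rw [Finset.sum_congr rfl step1]
  have step2 : ∀ a ∈ S, ∑ b ∈ S.erase a,
      (1 + (n:ℝ)/2 * ((if a = z then 1 else 0) + (if b = z then (1:ℝ) else 0)))
      = (S.card - 1) + (n:ℝ)/2 * ((S.card - 1) * (if a = z then 1 else 0)
          + (if z ∈ S.erase a then (1:ℝ) else 0)) := by
    intro a ha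
    rw [Finset.sum_add_distrib, Finset.sum_const, ← Finset.mul_sum,
      Finset.sum_add_distrib, Finset.sum_const, Finset.sum_ite_eq' (S.erase a) z (fun _ => (1:ℝ)),
      Finset.card_erase_of_mem ha]
    have h1 : 1 ≤ S.card := Finset.card_pos.mpr ⟨a, ha⟩
    simp only [nsmul_eq_mul, smul_eq_mul, Nat.cast_sub h1]
    push_cast
    ring
  rw [Finset.sum_congr rfl step2]
  by_cases hzS : z ∈ S
  · rw [if_pos hzS]
    have h1 : 1 ≤ S.card := Finset.card_pos.mpr ⟨z, hzS⟩
    rw [Finset.sum_add_distrib, Finset.sum_const, ← Finset.mul_sum, Finset.sum_add_distrib,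
      ← Finset.mul_sum, Finset.sum_ite_eq' S z]
    have e2 : ∑ a ∈ S, (if z ∈ S.erase a then (1:ℝ) else 0)
        = ∑ a ∈ S, (if a = z then 0 else 1) := by
      apply Finset.sum_congr rfl
      intro a ha
      by_cases h : a = z <;> simp [h, Finset.mem_erase, hzS, Ne.symm, h]
    rw [e2, Finset.sum_ite, Finset.sum_const, Finset.sum_const]
    have : (S.filter (fun a => ¬ a = z)).card = S.card - 1 := by
      rw [Finset.filter_not, Finset.filter_eq', if_pos hzS]
      simp [Finset.card_sdiff, hzS]
    rw [this]
    simp [hzS]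
    push_cast [h1]
    ring
  · rw [if_neg hzS]
    have e3 : ∀ a ∈ S, ((S.card:ℝ) - 1) + (n:ℝ)/2 * (((S.card:ℝ) - 1) * (if a = z then 1 else 0)
          + (if z ∈ S.erase a then (1:ℝ) else 0)) = (S.card - 1) := by
      intro a ha
      have h1 : a ≠ z := fun h => hzS (h ▸ ha)
      have h2 : z ∉ S.erase a := fun h => hzS (Finset.mem_of_mem_erase h)
      simp [h1, h2]
    rw [Finset.sum_congr rfl e3, Finset.sum_const]
    ring

theorem counterexample_densest_subgraph (n : ℕ) (hn : 2 ≤ n)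
    (w : Fin n → Fin n → ℝ)
    (hw : w = fun i j =>
      if i ≠ j then (if i.val = 0 ∨ j.val = 0 then (n : ℝ) / 2 + 1 else 1) else 0)
    (density : Finset (Fin n) → ℝ)
    (hdensity : density = fun S => ((1 / 2) * ∑ a ∈ S, ∑ b ∈ S.erase a, w a b) / S.card) :
    density Finset.univ = (n : ℝ) - 1 ∧
      ∀ S : Finset (Fin n), S.Nonempty → density S ≤ (n : ℝ) - 1 := by
  have hn0 : 0 < n := by omega
  subst hw hdensity
  simp only
  constructor
  · rw [sum_key n hn0 Finset.univ, if_pos (Finset.mem_univ _), Finset.card_univ, Fintype.card_fin]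
    have hnR : (0:ℝ) < n := by positivity
    field_simp
    ring
  · intro S hS
    rw [sum_key n hn0 S]
    have hk1 : 1 ≤ S.card := Finset.card_pos.mpr hS
    have hkn : S.card ≤ n := by
      simpa using Finset.card_le_card (Finset.subset_univ S)
    have hkR : (1:ℝ) ≤ S.card := by exact_mod_cast hk1
    have hknR : (S.card : ℝ) ≤ n := by exact_mod_cast hkn
    have hkpos : (0:ℝ) < S.card := by linarith
    by_cases hz : (⟨0, hn0⟩ : Fin n) ∈ S
    · rw [if_pos hz, div_le_iff₀ hkpos]
      nlinarith [mul_nonneg (sub_nonneg.mpr hknR) (by linarith : (0:ℝ) ≤ (S.card:ℝ) + 1)]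
    · rw [if_neg hz, div_le_iff₀ hkpos]
      nlinarith
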